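/- Let κ be a regular uncountable cardinal. If principle E⁻(κ) holds, then principle C*⁻(κ) holds. -/

import Mathlib

open Cardinal

/-- `C` is closed and unbounded (club) in the ordinal `o`. -/
def ClubIn (o : Ordinal) (C : Set Ordinal) : Prop :=
  C ⊆ Set.Iio o ∧ (∀ α < o, ∃ β ∈ C, α < β) ∧
    ∀ α < o, 0 < α → (∀ β < α, ∃ γ ∈ C, β < γ ∧ γ < α) → α ∈ C

/-- `S` is a stationary subset of the ordinal `o`: it meets every club subset of `o`. -/
def StationaryIn (o : Ordinal) (S : Set Ordinal) : Prop :=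
  S ⊆ Set.Iio o ∧ ∀ C, ClubIn o C → (S ∩ C).Nonempty

/-- `S` is a cofinal (unbounded) subset of the ordinal `o`. -/
def CofinalIn (o : Ordinal) (S : Set Ordinal) : Prop :=
  S ⊆ Set.Iio o ∧ ∀ α < o, ∃ β ∈ S, α < β

/-- For a matrix `A` of subsets of `ℕ`, a finite sequence `t ∈ ω^{<ω}` and
`s : {0,…,|t|-1} → Ordinal`, this is `A[s,t] = ⋂_{i<|t|} A(s i, t i)`. -/
def MatInt (A : Ordinal → ℕ → Set ℕ) (t : List ℕ) (s : Fin t.length → Ordinal) : Set ℕ :=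
  ⋂ i, A (s i) (t.get i)

/-- Principle E⁻(κ). -/
def PrincipleEminus (κ : Cardinal) : Prop :=
  ∀ (T : Set (List ℕ)) (A : Ordinal → ℕ → Set ℕ),
    (∃ S : Set Ordinal, CofinalIn κ.ord S ∧
      {X : Set ℕ | ∃ t ∈ T, ∃ s : Fin (List.length t) → Ordinal,
        Function.Injective s ∧ (∀ i, s i ∈ S) ∧ X = MatInt A t s}.Countable) ∨
    (∃ t ∈ T, ∃ D : Fin t.length → Set Ordinal,
      (∀ i, CofinalIn κ.ord (D i)) ∧
      ∀ s₀ s₁ : Fin t.length → Ordinal, Function.Injective s₀ → Function.Injective s₁ →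
        (∀ i, s₀ i ∈ D i) → (∀ i, s₁ i ∈ D i) → (∀ i, s₀ i ≠ s₁ i) →
          MatInt A t s₀ ≠ MatInt A t s₁)

/-- Principle C*⁻(κ). -/
def PrincipleCstarMinus (κ : Cardinal) : Prop :=
  ∀ (T : Set (List ℕ)) (A : Ordinal → ℕ → Set ℕ),
    (∃ S : Set Ordinal, CofinalIn κ.ord S ∧
      ∀ t ∈ T, ∀ s : Fin t.length → Ordinal, Function.Injective s →
        (∀ i, s i ∈ S) → (MatInt A t s).Finite) ∨
    (∃ t ∈ T, ∃ D : Fin t.length → Set Ordinal,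
      (∀ i, CofinalIn κ.ord (D i)) ∧
      ∀ s : Fin t.length → Ordinal, Function.Injective s →
        (∀ i, s i ∈ D i) → (MatInt A t s).Infinite)

/-- If κ is a regular uncountable cardinal and E⁻(κ) holds, then C*⁻(κ) holds. -/
theorem statement_3 (κ : Cardinal) (hreg : κ.IsRegular) (hunc : ℵ₀ < κ)
    (hE : PrincipleEminus κ) : PrincipleCstarMinus κ := by
  intro T A
  set o := κ.ord with ho
  have ho_lim : Order.IsSuccLimit o := Cardinal.isSuccLimit_ord hreg.aleph0_le
  have hsup : ∀ {ι : Type} [Countable ι] (f : ι → Ordinal), (∀ i, f i < o) → iSup f < o := by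
    intro ι _ f hf
    rw [ho] at hf ⊢
    refine Cardinal.iSup_lt_ord_lift_of_isRegular hreg ?_ hf
    refine lt_of_le_of_lt (Cardinal.lift_le.2 (Cardinal.mk_le_aleph0 (α := ι))) ?_
    rwa [Cardinal.lift_aleph0]
  by_cases hcase : ∃ t ∈ T, ∃ X : Set ℕ, X.Infinite ∧
      ∀ i : Fin t.length, CofinalIn o {α | α < o ∧ X ⊆ A α (t.get i)}
  · obtain ⟨t, htT, X, hXinf, hD⟩ := hcase
    right
    refine ⟨t, htT, fun i => {α | α < o ∧ X ⊆ A α (t.get i)}, hD, ?_⟩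
    intro s hs hmem
    refine hXinf.mono ?_
    intro x hx
    exact Set.mem_iInter.2 fun i => (hmem i).2 hx
  · push_neg at hcase
    rcases hE T A with ⟨S, hScof, hFcnt⟩ | ⟨t, htT, D, hDcof, hdist⟩
    · -- E alternative (1)
      left
      set F := {X : Set ℕ | ∃ t ∈ T, ∃ s : Fin (List.length t) → Ordinal,
        Function.Injective s ∧ (∀ i, s i ∈ S) ∧ X = MatInt A t s} with hF
      set Pset := T ×ˢ F with hP
      have hPcnt : Pset.Countable := (Set.to_countable T).prod hFcnt
      have claim : ∀ p : List ℕ × Set ℕ, p ∈ Pset → ∃ β, β < o ∧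
          (p.2.Infinite → ∃ i : Fin p.1.length,
            ∀ α, β < α → α < o → ¬ p.2 ⊆ A α (p.1.get i)) := by
        intro p hp
        by_cases hinf : p.2.Infinite
        · obtain ⟨i, hnc⟩ := hcase p.1 hp.1 p.2 hinf
          have hub : ¬ ∀ α < o, ∃ β ∈ {α | α < o ∧ p.2 ⊆ A α (p.1.get i)}, α < β := by
            intro h
            exact hnc ⟨fun α hα => hα.1, h⟩
          push_neg at hub
          obtain ⟨β, hβo, hβ⟩ := hub
          exact ⟨β, hβo, fun _ => ⟨i, fun α hβα hαo hsub' =>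
            absurd (hβ α ⟨hαo, hsub'⟩) (not_le.2 hβα)⟩⟩
        · exact ⟨0, ho_lim.pos, fun h => absurd h hinf⟩
      haveI := hPcnt.to_subtype
      choose bfun hb1 hb2 using fun p : ↥Pset => claim p p.2
      have hβs : iSup bfun < o := hsup bfun hb1
      refine ⟨S ∩ Set.Ioi (iSup bfun), ⟨fun α hα => hScof.1 hα.1, ?_⟩, ?_⟩
      · intro α hα
        obtain ⟨β, hβS, hβ⟩ := hScof.2 (max α (iSup bfun)) (max_lt hα hβs)
        exact ⟨β, ⟨hβS, lt_of_le_of_lt (le_max_right _ _) hβ⟩,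
          lt_of_le_of_lt (le_max_left _ _) hβ⟩
      · intro t ht s hsinj hsmem
        by_contra hfin
        have hXinf : (MatInt A t s).Infinite := hfin
        have hXF : MatInt A t s ∈ F :=
          ⟨t, ht, s, hsinj, fun i => (hsmem i).1, rfl⟩
        have hpmem : ((t, MatInt A t s) : List ℕ × Set ℕ) ∈ Pset := ⟨ht, hXF⟩
        obtain ⟨i, hi⟩ := hb2 ⟨(t, MatInt A t s), hpmem⟩ hXinf
        refine hi (s i) ?_ (hScof.1 (hsmem i).1) ?_
        · exact lt_of_le_of_lt (Ordinal.le_iSup bfun _) (hsmem i).2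
        · exact Set.iInter_subset (fun j => A (s j) (t.get j)) i
    · -- E alternative (2)
      by_contra hcon
      push_neg at hcon
      obtain ⟨-, h2⟩ := hcon
      have key : ∀ γ : Ordinal, ∃ s : Fin t.length → Ordinal, γ < o →
          Function.Injective s ∧ (∀ i, s i ∈ D i ∧ γ < s i) ∧ (MatInt A t s).Finite := by
        intro γ
        by_cases hγ : γ < o
        · have hcof : ∀ i, CofinalIn o (D i ∩ Set.Ioi γ) := by
            intro i
            refine ⟨fun α hα => (hDcof i).1 hα.1, ?_⟩
            intro α hα
            obtain ⟨β, hβD, hβ⟩ := (hDcof i).2 (max α γ) (max_lt hα hγ)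
            exact ⟨β, ⟨hβD, lt_of_le_of_lt (le_max_right _ _) hβ⟩,
              lt_of_le_of_lt (le_max_left _ _) hβ⟩
          obtain ⟨s, hsinj, hsmem, hsfin⟩ := h2 t htT (fun i => D i ∩ Set.Ioi γ) hcof
          exact ⟨s, fun _ => ⟨hsinj, fun i => ⟨(hsmem i).1, (hsmem i).2⟩,
            hsfin⟩⟩
        · exact ⟨fun _ => 0, fun h => absurd h hγ⟩
      choose sfun hsfun using key
      set φ : Ordinal → Finset ℕ := fun γ =>
        if h : γ < o then ((hsfun γ h).2.2).toFinset else ∅ with hφdef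
      have hφval : ∀ γ (h : γ < o), ↑(φ γ) = MatInt A t (sfun γ) := by
        intro γ h
        simp only [hφdef]
        rw [dif_pos h]
        exact Set.Finite.coe_toFinset _
      have fib : ∃ X : Finset ℕ, ∀ γ, γ < o → ∃ δ, δ < o ∧ γ < δ ∧ φ δ = X := by
        by_contra hno
        push_neg at hno
        choose bnd hbnd1 hbnd2 using hno
        have hsup' : iSup bnd < o := hsup bnd hbnd1
        have hδ : iSup bnd + 1 < o := by rw [Ordinal.add_one_eq_succ]; exact ho_lim.succ_lt hsup'
        exact hbnd2 (φ (iSup bnd + 1)) (iSup bnd + 1) hδ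
          (lt_of_le_of_lt (Ordinal.le_iSup bnd _) (lt_add_one _)) rfl
      obtain ⟨X, hX⟩ := fib
      obtain ⟨γ₁, hγ₁o, -, hφ₁⟩ := hX 0 ho_lim.pos
      have spec₁ := hsfun γ₁ hγ₁o
      have hm : ∀ i, sfun γ₁ i < o := fun i => (hDcof i).1 (spec₁.2.1 i).1
      have hmo : iSup (sfun γ₁) < o := hsup _ hm
      obtain ⟨γ₂, hγ₂o, hγ₂gt, hφ₂⟩ := hX _ hmo
      have spec₂ := hsfun γ₂ hγ₂o
      have hlt : ∀ i, sfun γ₁ i < sfun γ₂ i := fun i =>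
        lt_trans (lt_of_le_of_lt (Ordinal.le_iSup (sfun γ₁) i) hγ₂gt) (spec₂.2.1 i).2
      refine hdist (sfun γ₁) (sfun γ₂) spec₁.1 spec₂.1
        (fun i => (spec₁.2.1 i).1) (fun i => (spec₂.2.1 i).1)
        (fun i => (hlt i).ne) ?_
      have e1 : MatInt A t (sfun γ₁) = ↑X := by
        rw [← hφ₁]; exact (hφval γ₁ hγ₁o).symm
      have e2 : MatInt A t (sfun γ₂) = ↑X := by
        rw [← hφ₂]; exact (hφval γ₂ hγ₂o).symm
      rw [e1, e2]
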